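/- Let ρ be an ordinal, a ∈ X, m : ℕ → ℕ strictly increasing, and y : ℕ → X a sequence with d (y n) a = ω^ρ · (m n) for all n ∈ ℕ. Then there exists a sequence z : ℕ → X such that for every μ ∈ ℕ, {n : d (y n) a ♯ ω^ρ · μ ≤ d (z n) a} ∈ F. (This is the 'farther galaxy' construction in the proof of Theorem 5.1: the ρ-galaxy of [z] is further away from the principal ρ-galaxy than the ρ-galaxy of [y].) -/

import Mathlib

open Filter Ordinal
open scoped Ordinal

universe u

/-- The natural (Hessenberg) sum of ordinals, as `Ordinal.nadd` was defined in the older Mathlib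
(removed since). -/
noncomputable def Ordinal.nadd : Ordinal.{u} → Ordinal.{u} → Ordinal.{u}
  | a, b =>
    max (⨆ x : Set.Iio a, Order.succ (Ordinal.nadd x.1 b))
      (⨆ x : Set.Iio b, Order.succ (Ordinal.nadd a x.1))
termination_by a b => (a, b)
decreasing_by
  · exact Prod.Lex.left _ _ x.2
  · exact Prod.Lex.right _ x.2

infixl:65 " ♯ " => Ordinal.nadd

namespace Ordinal

theorem nadd_def' (a b : Ordinal.{u}) : a ♯ b = max (⨆ x : Set.Iio a, Order.succ (x.1 ♯ b))
    (⨆ x : Set.Iio b, Order.succ (a ♯ x.1)) := by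
  rw [Ordinal.nadd]

theorem lt_nadd_left {a' a : Ordinal.{u}} (h : a' < a) (b : Ordinal.{u}) : a' ♯ b < a ♯ b := by
  rw [nadd_def' a b]
  exact (Order.lt_succ _).trans_le (le_max_of_le_left
    (le_ciSup (f := fun x : Set.Iio a => Order.succ (x.1 ♯ b)) bddAbove_of_small ⟨a', h⟩))

theorem lt_nadd_right {b' b : Ordinal.{u}} (h : b' < b) (a : Ordinal.{u}) : a ♯ b' < a ♯ b := by
  rw [nadd_def' a b]
  exact (Order.lt_succ _).trans_le (le_max_of_le_right
    (le_ciSup (f := fun x : Set.Iio b => Order.succ (a ♯ x.1)) bddAbove_of_small ⟨b', h⟩))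

theorem nadd_le_of {a b c : Ordinal.{u}} (h1 : ∀ a' < a, a' ♯ b < c) (h2 : ∀ b' < b, a ♯ b' < c) :
    a ♯ b ≤ c := by
  rw [nadd_def']
  exact max_le (ciSup_le' fun x => Order.succ_le_of_lt (h1 x.1 x.2))
    (ciSup_le' fun x => Order.succ_le_of_lt (h2 x.1 x.2))

theorem nadd_le_iff {a b c : Ordinal.{u}} :
    a ♯ b ≤ c ↔ (∀ a' < a, a' ♯ b < c) ∧ ∀ b' < b, a ♯ b' < c :=
  ⟨fun h => ⟨fun _ ha => (lt_nadd_left ha b).trans_le h, fun _ hb => (lt_nadd_right hb a).trans_le h⟩,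
    fun h => nadd_le_of h.1 h.2⟩

theorem lt_nadd_iff {a b c : Ordinal.{u}} :
    c < a ♯ b ↔ (∃ a' < a, c ≤ a' ♯ b) ∨ ∃ b' < b, c ≤ a ♯ b' := by
  constructor
  · intro h
    by_contra hn
    push_neg at hn
    exact absurd (nadd_le_of (fun a' ha' => hn.1 a' ha') (fun b' hb' => hn.2 b' hb')) (not_le.2 h)
  · rintro (⟨a', ha', hc⟩ | ⟨b', hb', hc⟩)
    · exact hc.trans_lt (lt_nadd_left ha' b)
    · exact hc.trans_lt (lt_nadd_right hb' a)

theorem nadd_le_nadd_right {a b : Ordinal.{u}} (h : a ≤ b) (c : Ordinal.{u}) : a ♯ c ≤ b ♯ c :=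
  h.eq_or_lt.elim (fun e => e ▸ le_rfl) (fun h => (lt_nadd_left h c).le)

theorem nadd_le_nadd_left {b c : Ordinal.{u}} (h : b ≤ c) (a : Ordinal.{u}) : a ♯ b ≤ a ♯ c :=
  h.eq_or_lt.elim (fun e => e ▸ le_rfl) (fun h => (lt_nadd_right h a).le)

theorem nadd_lt_nadd {a b c d : Ordinal.{u}} (h1 : a < b) (h2 : c < d) : a ♯ c < b ♯ d :=
  (lt_nadd_left h1 c).trans_le (nadd_le_nadd_left h2.le b)

theorem le_nadd_self (a b : Ordinal.{u}) : a ≤ a ♯ b := by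
  induction a using Ordinal.induction with
  | _ a IH =>
  by_contra h
  push_neg at h
  exact absurd (lt_nadd_left h b) (not_lt.2 (IH _ h))

@[simp]
theorem nadd_zero (a : Ordinal.{u}) : a ♯ 0 = a := by
  induction a using Ordinal.induction with
  | _ a IH =>
  refine le_antisymm (nadd_le_of (fun a' h => ?_) (fun b' h => absurd h not_lt_zero))
    (le_nadd_self a 0)
  rw [IH a' h]
  exact h

theorem nadd_comm (a b : Ordinal.{u}) : a ♯ b = b ♯ a := by
  induction a using Ordinal.induction generalizing b with
  | _ a IHa =>
  induction b using Ordinal.induction with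
  | _ b IHb =>
  refine le_antisymm (nadd_le_of (fun a' h => ?_) (fun b' h => ?_))
    (nadd_le_of (fun b' h => ?_) (fun a' h => ?_))
  · rw [IHa a' h b]; exact lt_nadd_right h b
  · rw [IHb b' h]; exact lt_nadd_left h a
  · rw [← IHb b' h]; exact lt_nadd_right h a
  · rw [← IHa a' h b]; exact lt_nadd_left h b

theorem nadd_assoc (a b c : Ordinal.{u}) : a ♯ b ♯ c = a ♯ (b ♯ c) := by
  induction a using Ordinal.induction generalizing b c with
  | _ a IHa =>
  induction b using Ordinal.induction generalizing c with
  | _ b IHb =>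
  induction c using Ordinal.induction with
  | _ c IHc =>
  apply le_antisymm
  · apply nadd_le_of
    · intro d hd
      rcases lt_nadd_iff.1 hd with ⟨a', ha', hda⟩ | ⟨b', hb', hdb⟩
      · calc d ♯ c ≤ a' ♯ b ♯ c := nadd_le_nadd_right hda c
          _ = a' ♯ (b ♯ c) := IHa a' ha' b c
          _ < a ♯ (b ♯ c) := lt_nadd_left ha' _
      · calc d ♯ c ≤ a ♯ b' ♯ c := nadd_le_nadd_right hdb c
          _ = a ♯ (b' ♯ c) := IHb b' hb' c
          _ < a ♯ (b ♯ c) := lt_nadd_right (lt_nadd_left hb' c) a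
    · intro c' hc'
      rw [IHc c' hc']
      exact lt_nadd_right (lt_nadd_right hc' b) a
  · apply nadd_le_of
    · intro a' ha'
      rw [← IHa a' ha' b c]
      exact lt_nadd_left (lt_nadd_left ha' b) c
    · intro d hd
      rcases lt_nadd_iff.1 hd with ⟨b', hb', hdb⟩ | ⟨c', hc', hdc⟩
      · calc a ♯ d ≤ a ♯ (b' ♯ c) := nadd_le_nadd_left hdb a
          _ = a ♯ b' ♯ c := (IHb b' hb' c).symm
          _ < a ♯ b ♯ c := lt_nadd_left (lt_nadd_right hb' a) c
      · calc a ♯ d ≤ a ♯ (b ♯ c') := nadd_le_nadd_left hdc a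
          _ = a ♯ b ♯ c' := (IHc c' hc').symm
          _ < a ♯ b ♯ c := lt_nadd_right hc' _

theorem nadd_right_comm (a b c : Ordinal.{u}) : a ♯ b ♯ c = a ♯ c ♯ b := by
  rw [nadd_assoc, nadd_comm b c, ← nadd_assoc]

theorem add_le_nadd (a b : Ordinal.{u}) : a + b ≤ a ♯ b := by
  induction b using Ordinal.induction with
  | _ b IH =>
  by_contra h
  push_neg at h
  have h1 : a ≤ a ♯ b := le_nadd_self a b
  have h2 : a + (a ♯ b - a) = a ♯ b := Ordinal.add_sub_cancel_of_le h1
  have h3 : a ♯ b - a < b := by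
    rw [← h2] at h
    exact (add_lt_add_iff_left a).1 h
  have := (IH _ h3).trans_lt (lt_nadd_right h3 a)
  rw [h2] at this
  exact lt_irrefl _ this

end Ordinal

theorem nadd_opow_mul_nat_le : ∀ ρ : Ordinal, ∀ p q : ℕ,
    (ω : Ordinal) ^ ρ * p ♯ ω ^ ρ * q ≤ ω ^ ρ * (p + q : ℕ) := by
  intro ρ
  induction ρ using Ordinal.induction with
  | _ ρ IH =>
  have hpos : (0:Ordinal) < ω ^ ρ := opow_pos ρ omega0_pos
  -- closure of ω^ρ under natural addition
  have hC : ∀ a b : Ordinal, a < ω ^ ρ → b < ω ^ ρ → a ♯ b < ω ^ ρ := by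
    rcases eq_or_ne ρ 0 with rfl | hρ
    · intro a b ha hb
      rw [opow_zero, Ordinal.lt_one_iff_zero] at ha hb
      subst ha; subst hb
      simpa using hpos
    · have hex : ∀ a : Ordinal, a < ω ^ ρ → ∃ e < ρ, ∃ n : ℕ, a < ω ^ e * n := by
        intro a ha
        rcases eq_or_ne a 0 with rfl | ha0
        · exact ⟨0, pos_iff_ne_zero.2 hρ, 1, by simpa using zero_lt_one⟩
        · refine ⟨log ω a, (lt_opow_iff_log_lt one_lt_omega0 ha0).1 ha, ?_⟩
          have h1 := lt_opow_succ_log_self one_lt_omega0 a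
          rw [opow_succ] at h1
          obtain ⟨n', hn', h2⟩ := (lt_mul_iff_of_isSuccLimit isSuccLimit_omega0).1 h1
          obtain ⟨n, rfl⟩ := lt_omega0.1 hn'
          exact ⟨n, h2⟩
      intro a b ha hb
      obtain ⟨e, he, n, han⟩ := hex a ha
      obtain ⟨f, hf, m, hbm⟩ := hex b hb
      have hg : max e f < ρ := max_lt he hf
      have h1 : a < ω ^ max e f * n :=
        han.trans_le (mul_le_mul_left (opow_le_opow_right omega0_pos (le_max_left _ _)) _)
      have h2 : b < ω ^ max e f * m :=
        hbm.trans_le (mul_le_mul_left (opow_le_opow_right omega0_pos (le_max_right _ _)) _)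
      calc a ♯ b < ω ^ max e f * n ♯ ω ^ max e f * m := nadd_lt_nadd h1 h2
        _ ≤ ω ^ max e f * (n + m : ℕ) := IH _ hg n m
        _ < ω ^ max e f * ω := by
            rw [mul_lt_mul_iff_of_pos_left (opow_pos _ omega0_pos)]
            exact nat_lt_omega0 _
        _ ≤ ω ^ ρ := by
            rw [← opow_succ]
            exact opow_le_opow_right omega0_pos (Order.succ_le_of_lt hg)
  -- absorption
  have hS : ∀ k : ℕ, ∀ c : Ordinal, c < ω ^ ρ → ω ^ ρ * k ♯ c ≤ ω ^ ρ * k + c := by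
    intro k
    induction k using Nat.strong_induction_on with
    | _ k IHk =>
    intro c
    induction c using Ordinal.induction with
    | _ c IHc =>
    intro hc
    rw [nadd_le_iff]
    constructor
    · intro a' ha'
      have hk : k ≠ 0 := by
        rintro rfl
        exact not_lt_zero (a := a') (by simpa using ha')
      have hr : a' % ω ^ ρ < ω ^ ρ := mod_lt a' hpos.ne'
      have hdiv : ω ^ ρ * (a' / ω ^ ρ) + a' % ω ^ ρ = a' := div_add_mod a' _
      have hj0 : a' / ω ^ ρ < (k : Ordinal) := (div_lt hpos.ne').2 ha'
      obtain ⟨j, hj⟩ := lt_omega0.1 (hj0.trans (nat_lt_omega0 k))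
      rw [hj] at hj0 hdiv
      have hjk : j < k := by exact_mod_cast hj0
      calc a' ♯ c = (ω ^ ρ * j + a' % ω ^ ρ) ♯ c := by rw [hdiv]
        _ ≤ (ω ^ ρ * j ♯ a' % ω ^ ρ) ♯ c := nadd_le_nadd_right (add_le_nadd _ _) _
        _ = ω ^ ρ * j ♯ (a' % ω ^ ρ ♯ c) := nadd_assoc _ _ _
        _ ≤ ω ^ ρ * j + (a' % ω ^ ρ ♯ c) := IHk j hjk _ (hC _ _ hr hc)
        _ < ω ^ ρ * j + ω ^ ρ := add_lt_add_right (hC _ _ hr hc) _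
        _ = ω ^ ρ * ((j : Ordinal) + 1) := (mul_add_one _ _).symm
        _ ≤ ω ^ ρ * k := by
            apply mul_le_mul_right
            exact_mod_cast Nat.succ_le_of_lt hjk
        _ ≤ ω ^ ρ * k + c := le_self_add
    · intro c' hc'
      exact (IHc c' hc' (hc'.trans hc)).trans_lt (add_lt_add_right hc' _)
  -- key step
  have hKey : ∀ k : ℕ, ω ^ ρ * k ♯ ω ^ ρ ≤ ω ^ ρ * ((k : Ordinal) + 1) := by
    intro k
    induction k using Nat.strong_induction_on with
    | _ k IHk =>
    rw [nadd_le_iff]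
    constructor
    · intro a' ha'
      have hk : k ≠ 0 := by
        rintro rfl
        exact not_lt_zero (a := a') (by simpa using ha')
      have hr : a' % ω ^ ρ < ω ^ ρ := mod_lt a' hpos.ne'
      have hdiv : ω ^ ρ * (a' / ω ^ ρ) + a' % ω ^ ρ = a' := div_add_mod a' _
      have hj0 : a' / ω ^ ρ < (k : Ordinal) := (div_lt hpos.ne').2 ha'
      obtain ⟨j, hj⟩ := lt_omega0.1 (hj0.trans (nat_lt_omega0 k))
      rw [hj] at hj0 hdiv
      have hjk : j < k := by exact_mod_cast hj0
      have hj1 : ((j : Ordinal) + 1) = ((j + 1 : ℕ) : Ordinal) := by push_cast; rfl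
      calc a' ♯ ω ^ ρ = (ω ^ ρ * j + a' % ω ^ ρ) ♯ ω ^ ρ := by rw [hdiv]
        _ ≤ (ω ^ ρ * j ♯ a' % ω ^ ρ) ♯ ω ^ ρ := nadd_le_nadd_right (add_le_nadd _ _) _
        _ = (ω ^ ρ * j ♯ ω ^ ρ) ♯ a' % ω ^ ρ := nadd_right_comm _ _ _
        _ ≤ ω ^ ρ * ((j : Ordinal) + 1) ♯ a' % ω ^ ρ := nadd_le_nadd_right (IHk j hjk) _
        _ = ω ^ ρ * ((j + 1 : ℕ) : Ordinal) ♯ a' % ω ^ ρ := by rw [hj1]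
        _ ≤ ω ^ ρ * ((j + 1 : ℕ) : Ordinal) + a' % ω ^ ρ := hS (j + 1) _ hr
        _ < ω ^ ρ * ((j + 1 : ℕ) : Ordinal) + ω ^ ρ := add_lt_add_right hr _
        _ = ω ^ ρ * (((j + 1 : ℕ) : Ordinal) + 1) := (mul_add_one _ _).symm
        _ ≤ ω ^ ρ * ((k : Ordinal) + 1) := by
            apply mul_le_mul_right
            have : ((j + 1 : ℕ) : Ordinal) + 1 = ((j + 2 : ℕ) : Ordinal) := by
              push_cast
              rw [add_assoc, one_add_one_eq_two]
            rw [this]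
            have : (k : Ordinal) + 1 = ((k + 1 : ℕ) : Ordinal) := by push_cast; rfl
            rw [this]
            exact_mod_cast Nat.succ_le_of_lt (by omega)
    · intro c' hc'
      calc ω ^ ρ * k ♯ c' ≤ ω ^ ρ * k + c' := hS k c' hc'
        _ < ω ^ ρ * k + ω ^ ρ := add_lt_add_right hc' _
        _ = ω ^ ρ * ((k : Ordinal) + 1) := (mul_add_one _ _).symm
  -- conclusion
  intro p q
  induction q with
  | zero => simp
  | succ q IHq =>
    have h1 : ((q + 1 : ℕ) : Ordinal) = (q : Ordinal) + 1 := by push_cast; rfl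
    calc ω ^ ρ * p ♯ ω ^ ρ * ((q + 1 : ℕ) : Ordinal)
        = ω ^ ρ * p ♯ (ω ^ ρ * q + ω ^ ρ) := by rw [h1, mul_add_one]
      _ ≤ ω ^ ρ * p ♯ (ω ^ ρ * q ♯ ω ^ ρ) := nadd_le_nadd_left (add_le_nadd _ _) _
      _ = (ω ^ ρ * p ♯ ω ^ ρ * q) ♯ ω ^ ρ := (nadd_assoc _ _ _).symm
      _ ≤ ω ^ ρ * ((p + q : ℕ) : Ordinal) ♯ ω ^ ρ := nadd_le_nadd_right IHq _
      _ ≤ ω ^ ρ * (((p + q : ℕ) : Ordinal) + 1) := hKey (p + q)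
      _ = ω ^ ρ * ((p + (q + 1) : ℕ) : Ordinal) := by push_cast [add_assoc]; rfl


/-- Sequences `x, y : ℕ → X` are `ρ`-limitedly distant if there exists `μ ∈ ℕ` with
`{n : d (x n) (y n) ≤ ω^ρ · μ} ∈ F`. -/
def LimitedlyDistant {X : Type*} (d : X → X → Ordinal) (F : Ultrafilter ℕ)
    (ρ : Ordinal) (x y : ℕ → X) : Prop :=
  ∃ μ : ℕ, {n : ℕ | d (x n) (y n) ≤ ω ^ ρ * μ} ∈ F

theorem exists_farther_galaxy
    (X : Type*) (d : X → X → Ordinal)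
    (hd0 : ∀ a b : X, d a b = 0 ↔ a = b)
    (hdsymm : ∀ a b : X, d a b = d b a)
    (hdtri : ∀ a b c : X, d a c ≤ d a b ♯ d b c)
    (F : Ultrafilter ℕ) (hF : ∀ s : Set ℕ, sᶜ.Finite → s ∈ F)
    (ρ : Ordinal) (a : X) (m : ℕ → ℕ) (hm : StrictMono m)
    (y : ℕ → X) (hy : ∀ n : ℕ, d (y n) a = ω ^ ρ * (m n)) :
    ∃ z : ℕ → X,
      ∀ μ : ℕ, {n : ℕ | d (y n) a ♯ ω ^ ρ * μ ≤ d (z n) a} ∈ F := by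
  refine ⟨fun n => y (2 * n), fun μ => ?_⟩
  have hmadd : ∀ n k : ℕ, m n + k ≤ m (n + k) := by
    intro n k
    induction k with
    | zero => simp
    | succ k ih =>
      have := hm (show n + k < n + (k + 1) by omega)
      omega
  refine Filter.mem_of_superset (hF {n : ℕ | μ ≤ n} ?_) ?_
  · have : {n : ℕ | μ ≤ n}ᶜ = Set.Iio μ := by
      ext n; simp [Set.Iio, not_le]
    rw [this]
    exact Set.finite_Iio μ
  · intro n hn
    simp only [Set.mem_setOf_eq] at hn ⊢
    rw [hy n, hy (2 * n)]
    calc ω ^ ρ * (m n) ♯ ω ^ ρ * μ ≤ ω ^ ρ * ((m n + μ : ℕ) : Ordinal) :=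
          nadd_opow_mul_nat_le ρ (m n) μ
      _ ≤ ω ^ ρ * (m (2 * n)) := by
          apply mul_le_mul_right
          have h1 : m n + μ ≤ m (n + μ) := hmadd n μ
          have h2 : m (n + μ) ≤ m (2 * n) := hm.monotone (by omega)
          exact_mod_cast le_trans h1 h2
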